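/- For each natural number l ≥ 1 and 0 < v < 1, the l-th derivative of t ↦ e^{-√2 d_v(t)} = (v²/8) sech(√2 v t)² satisfies |d^l/dt^l [e^{-√2 d_v(t)}]| ≤ C_l v^{2+l} e^{-2√2 v |t|} for a constant C_l depending only on l. -/

import Mathlib

open Real

noncomputable def dv (v t : ℝ) : ℝ :=
  (1 / Real.sqrt 2) * Real.log ((8 / v ^ 2) * Real.cosh (Real.sqrt 2 * v * t) ^ 2)

noncomputable def qstep (p : Polynomial ℝ) : Polynomial ℝ :=
  (-2 : ℝ) • (Polynomial.X * p) + (1 - Polynomial.X ^ 2) * Polynomial.derivative p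

noncomputable def FF (p : Polynomial ℝ) (x : ℝ) : ℝ :=
  (Real.cosh x ^ 2)⁻¹ * p.eval (Real.sinh x / Real.cosh x)

lemma contDiff_polyeval (p : Polynomial ℝ) {n : ℕ∞} : ContDiff ℝ n (fun x : ℝ => p.eval x) := by
  induction p using Polynomial.induction_on' with
  | add p q hp hq => simpa using hp.add hq
  | monomial k a =>
      simpa [Polynomial.eval_monomial] using (contDiff_const (c := a)).mul (contDiff_id.pow k)

lemma hasDerivAt_FF (p : Polynomial ℝ) (x : ℝ) : HasDerivAt (FF p) (FF (qstep p) x) x := by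
  have hc : Real.cosh x ≠ 0 := (Real.cosh_pos x).ne'
  have h1 : HasDerivAt (fun x => Real.cosh x ^ 2)
      ((2 : ℕ) * Real.cosh x ^ 1 * Real.sinh x) x := (Real.hasDerivAt_cosh x).pow 2
  have h2 := h1.inv (pow_ne_zero 2 hc)
  have h3 : HasDerivAt (fun x => Real.sinh x / Real.cosh x)
      ((Real.cosh x * Real.cosh x - Real.sinh x * Real.sinh x) / Real.cosh x ^ 2) x :=
    (Real.hasDerivAt_sinh x).div (Real.hasDerivAt_cosh x) hc
  have h4 := (Polynomial.hasDerivAt p (Real.sinh x / Real.cosh x)).comp x h3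
  have h5 := h2.mul h4
  convert h5 using 1
  · rfl
  · rfl
  · funext y; rfl
  unfold FF qstep
  simp only [Polynomial.eval_add, Polynomial.eval_smul, Polynomial.eval_mul, Polynomial.eval_X,
    Polynomial.eval_sub, Polynomial.eval_one, Polynomial.eval_pow, smul_eq_mul]
  set P := Polynomial.eval (Real.sinh x / Real.cosh x) p with hP
  set Q := Polynomial.eval (Real.sinh x / Real.cosh x) (Polynomial.derivative p) with hQ
  have hid := Real.cosh_sq_sub_sinh_sq x
  simp only [Function.comp_apply, Pi.inv_apply]
  field_simp
  rw [← hP]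
  push_cast
  ring

lemma contDiff_FF (p : Polynomial ℝ) {n : ℕ∞} : ContDiff ℝ n (FF p) := by
  have hc : ∀ x : ℝ, Real.cosh x ≠ 0 := fun x => (Real.cosh_pos x).ne'
  exact ((Real.contDiff_cosh.pow 2).inv (fun x => pow_ne_zero 2 (hc x))).mul
    ((contDiff_polyeval p).comp (Real.contDiff_sinh.div Real.contDiff_cosh hc))

lemma iteratedDeriv_FF (p : Polynomial ℝ) (l : ℕ) :
    iteratedDeriv l (FF p) = FF (qstep^[l] p) := by
  induction l with
  | zero => simp
  | succ n ih =>
      rw [iteratedDeriv_succ, ih, Function.iterate_succ_apply']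
      exact funext fun x => (hasDerivAt_FF _ x).deriv

lemma abs_tanh_le (x : ℝ) : |Real.sinh x / Real.cosh x| ≤ 1 := by
  rw [abs_div, abs_of_pos (Real.cosh_pos x), div_le_one (Real.cosh_pos x)]
  nlinarith [sq_abs (Real.sinh x), Real.cosh_sq_sub_sinh_sq x, Real.cosh_pos x,
    abs_nonneg (Real.sinh x)]

lemma inv_cosh_sq_le (x : ℝ) : (Real.cosh x ^ 2)⁻¹ ≤ 4 * Real.exp (-2 * |x|) := by
  have h1 : Real.exp |x| / 2 ≤ Real.cosh x := by
    rw [← Real.cosh_abs, Real.cosh_eq]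
    have := Real.exp_pos (-|x|)
    linarith
  have h2 : Real.exp |x| ^ 2 / 4 ≤ Real.cosh x ^ 2 := by nlinarith [Real.exp_pos |x|]
  have h3 : (Real.cosh x ^ 2)⁻¹ ≤ (Real.exp |x| ^ 2 / 4)⁻¹ := by
    apply inv_anti₀ (by positivity) h2
  refine h3.trans_eq ?_
  rw [← Real.exp_nat_mul]
  push_cast
  rw [show (-2 : ℝ) * |x| = -(2 * |x|) by ring, Real.exp_neg]
  rw [inv_div]
  rw [div_eq_mul_inv]

lemma abs_FF_le (p : Polynomial ℝ) (x : ℝ) :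
    |FF p x| ≤ 4 * (∑ i ∈ Finset.range (p.natDegree + 1), |p.coeff i|) * Real.exp (-2 * |x|) := by
  have hev : |p.eval (Real.sinh x / Real.cosh x)| ≤
      ∑ i ∈ Finset.range (p.natDegree + 1), |p.coeff i| := by
    rw [Polynomial.eval_eq_sum_range]
    refine (Finset.abs_sum_le_sum_abs _ _).trans ?_
    apply Finset.sum_le_sum
    intro i _
    rw [abs_mul, abs_pow]
    calc |p.coeff i| * |Real.sinh x / Real.cosh x| ^ i
        ≤ |p.coeff i| * 1 := by
          apply mul_le_mul_of_nonneg_left _ (abs_nonneg _)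
          exact pow_le_one₀ (abs_nonneg _) (abs_tanh_le x)
      _ = |p.coeff i| := mul_one _
  have h0 : (0:ℝ) ≤ (Real.cosh x ^ 2)⁻¹ := by positivity
  rw [FF, abs_mul, abs_of_nonneg h0]
  calc (Real.cosh x ^ 2)⁻¹ * |p.eval (Real.sinh x / Real.cosh x)|
      ≤ (4 * Real.exp (-2 * |x|)) * (∑ i ∈ Finset.range (p.natDegree + 1), |p.coeff i|) :=
        mul_le_mul (inv_cosh_sq_le x) hev (abs_nonneg _) (by positivity)
    _ = 4 * (∑ i ∈ Finset.range (p.natDegree + 1), |p.coeff i|) * Real.exp (-2 * |x|) := by ring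

theorem exp_neg_sqrt2_dv_iteratedDeriv_bound (l : ℕ) (hl : 1 ≤ l) :
    ∃ C : ℝ, 0 < C ∧ ∀ v : ℝ, 0 < v → v < 1 → ∀ t : ℝ,
      |iteratedDeriv l (fun s => Real.exp (-(Real.sqrt 2) * dv v s)) t| ≤
        C * v ^ (2 + l) * Real.exp (-2 * Real.sqrt 2 * v * |t|) := by
  set p := qstep^[l] (1 : Polynomial ℝ) with hp
  set M := ∑ i ∈ Finset.range (p.natDegree + 1), |p.coeff i| with hM
  have hM0 : 0 ≤ M := Finset.sum_nonneg fun i _ => abs_nonneg _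
  have hs2 : (0:ℝ) < Real.sqrt 2 := Real.sqrt_pos.mpr (by norm_num)
  refine ⟨Real.sqrt 2 ^ l * (M + 1) / 2, by positivity, ?_⟩
  intro v hv hv1 t
  set a := Real.sqrt 2 * v with ha
  have ha0 : 0 < a := by positivity
  have hfun : (fun s => Real.exp (-(Real.sqrt 2) * dv v s))
      = fun s => (v ^ 2 / 8) * FF 1 (a * s) := by
    funext s
    rw [dv]
    have hA : (0:ℝ) < (8 / v ^ 2) * Real.cosh (Real.sqrt 2 * v * s) ^ 2 := by
      have := Real.cosh_pos (Real.sqrt 2 * v * s); positivity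
    have harg : -(Real.sqrt 2) * ((1 / Real.sqrt 2) *
        Real.log ((8 / v ^ 2) * Real.cosh (Real.sqrt 2 * v * s) ^ 2))
        = -(Real.log ((8 / v ^ 2) * Real.cosh (Real.sqrt 2 * v * s) ^ 2)) := by
      field_simp
    rw [harg, Real.exp_neg, Real.exp_log hA, FF]
    simp only [Polynomial.eval_one, mul_one]
    rw [mul_inv, inv_div]
  rw [hfun]
  have hG : ContDiff ℝ (l : ℕ∞) (FF (1 : Polynomial ℝ)) := contDiff_FF 1
  have hGa : ContDiff ℝ (l : ℕ∞) (fun s : ℝ => FF 1 (a * s)) :=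
    hG.comp (contDiff_const.mul contDiff_id)
  have h1 : iteratedDeriv l (fun s => (v ^ 2 / 8) * FF 1 (a * s)) t
      = (v ^ 2 / 8) * iteratedDeriv l (fun s => FF 1 (a * s)) t := by
    simp only [← iteratedDerivWithin_univ]
    exact iteratedDerivWithin_const_mul (Set.mem_univ t) uniqueDiffOn_univ _ hGa.contDiffWithinAt
  have h2 : iteratedDeriv l (fun s => FF 1 (a * s)) t
      = a ^ l * iteratedDeriv l (FF 1) (a * t) := by
    rw [iteratedDeriv_comp_const_mul hG a]
  rw [h1, h2, iteratedDeriv_FF, ← hp]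
  rw [abs_mul, abs_mul, abs_of_pos (by positivity : (0:ℝ) < v ^ 2 / 8),
    abs_of_pos (pow_pos ha0 l)]
  have hbound := abs_FF_le p (a * t)
  have hat : |a * t| = a * |t| := by rw [abs_mul, abs_of_pos ha0]
  calc v ^ 2 / 8 * (a ^ l * |FF p (a * t)|)
      ≤ v ^ 2 / 8 * (a ^ l * (4 * M * Real.exp (-2 * |a * t|))) := by
        apply mul_le_mul_of_nonneg_left _ (by positivity)
        exact mul_le_mul_of_nonneg_left hbound (by positivity)
    _ = (v ^ 2 / 8 * a ^ l * (4 * M)) * Real.exp (-2 * Real.sqrt 2 * v * |t|) := by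
        rw [hat, show (-2:ℝ) * (a * |t|) = -2 * Real.sqrt 2 * v * |t| by rw [ha]; ring]
        ring
    _ ≤ (Real.sqrt 2 ^ l * (M + 1) / 2 * v ^ (2 + l)) * Real.exp (-2 * Real.sqrt 2 * v * |t|) := by
        apply mul_le_mul_of_nonneg_right _ (Real.exp_pos _).le
        rw [ha, mul_pow, pow_add]
        nlinarith [mul_pos (mul_pos (pow_pos hs2 l) (pow_pos hv 2)) (pow_pos hv l)]
    _ = _ := by ring
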